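/- Let m = 2k+1 with k ≥ 1. The cyclic quadratic form D(x_0,...,x_{m-1}) = Σ_{i=0}^{m-1} (x_i + x_{i+k})^2 (indices mod m) satisfies Condition (r) for all r: for every integer vector x with Σ x_i = r (0 ≤ r ≤ m-1), D(x) ≥ D(v_r), where v_r = (1,...,1,0,...,0) with r ones. -/

import Mathlib

open Fin.NatCast

lemma int_le_sq' (z : ℤ) : z ≤ z ^ 2 := by
  rcases le_or_gt z 0 with h | h
  · nlinarith [sq_nonneg z]
  · nlinarith

lemma int_three_le_sq' (z : ℤ) : 3 * z - 2 ≤ z ^ 2 := by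
  rcases le_or_gt z 1 with h | h
  · nlinarith
  · have h2 : 2 ≤ z := h
    nlinarith

lemma sum_ite_range (r : ℕ) : ∀ n : ℕ,
    ∑ j ∈ Finset.range n, (if j < r then (1:ℤ) else 0) = ((min n r : ℕ) : ℤ) := by
  intro n
  induction n with
  | zero => simp
  | succ n ih =>
    rw [Finset.sum_range_succ, ih]
    by_cases h : n < r
    · have h2 : min (n+1) r = min n r + 1 := by omega
      simp [h, h2]
      omega
    · have h2 : min (n+1) r = min n r := by omega
      simp [h, h2]

/-- For odd `m = 2k+1`, the cyclic form `D(x) = Σ (x_i + x_{i+k})²` satisfies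
Condition (r) for `0 ≤ r ≤ m-1`. -/
theorem stmt13 (k : ℕ) (hk : 1 ≤ k) (r : ℕ) (hr : r ≤ 2 * k) :
    let m := 2 * k + 1
    let D : (Fin m → ℤ) → ℤ := fun x => ∑ i, (x i + x (i + (k : Fin m))) ^ 2
    let v : Fin m → ℤ := fun i => if (i : ℕ) < r then 1 else 0
    ∀ x : Fin m → ℤ, (∑ i, x i) = (r : ℤ) → D v ≤ D x := by
  intro m D v x hx
  have hm : m = 2 * k + 1 := rfl
  have hkv : ((k : Fin m) : ℕ) = k := by
    rw [Fin.val_natCast]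
    exact Nat.mod_eq_of_lt (show k < 2*k+1 by omega)
  have hval : ∀ i : Fin m, (i + (k : Fin m)).val = ((i : ℕ) + k) % m := by
    intro i; rw [Fin.val_add, hkv]
  have hshift : ∀ y : Fin m → ℤ, ∑ i, y (i + (k : Fin m)) = ∑ i, y i := by
    intro y
    exact Fintype.sum_equiv (Equiv.addRight (k : Fin m)) _ _ (fun i => rfl)
  have hsum2 : ∀ y : Fin m → ℤ, ∑ i, (y i + y (i + (k : Fin m))) = 2 * ∑ i, y i := by
    intro y
    rw [Finset.sum_add_distrib, hshift]; ring
  have hsv : ∑ i, v i = (r : ℤ) := by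
    show ∑ i : Fin m, (if (i : ℕ) < r then (1:ℤ) else 0) = (r : ℤ)
    rw [Fin.sum_univ_eq_sum_range (fun j => if j < r then (1:ℤ) else 0) m,
      sum_ite_range r m]
    congr 1
    omega
  show D v ≤ D x
  rcases le_or_gt r k with hrk | hrk
  · -- q = 0 : each entry of v + shift is 0 or 1
    have hvz : ∀ i : Fin m, (v i + v (i + (k:Fin m)))^2 = v i + v (i + (k:Fin m)) := by
      intro i
      have hi : (i : ℕ) < 2*k+1 := i.isLt
      have h2 := hval i
      by_cases h1 : (i : ℕ) < r
      · have h3 : ¬ ((i + (k:Fin m)).val < r) := by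
          rw [h2]
          have e : ((i:ℕ) + k) % (2*k+1) = (i:ℕ) + k := Nat.mod_eq_of_lt (by omega)
          show ¬(((i:ℕ) + k) % (2*k+1) < r)
          rw [e]; omega
        simp [v, h1, h3]
      · by_cases h3 : (i + (k:Fin m)).val < r <;> simp [v, h1, h3]
    have hDv : D v = 2 * (r : ℤ) := by
      show ∑ i, (v i + v (i + (k:Fin m)))^2 = 2 * (r : ℤ)
      rw [Finset.sum_congr rfl (fun i _ => hvz i), hsum2, hsv]
    have hDx : 2 * (r:ℤ) ≤ D x := by
      show 2*(r:ℤ) ≤ ∑ i, (x i + x (i + (k:Fin m)))^2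
      calc 2*(r:ℤ) = ∑ i, (x i + x (i + (k:Fin m))) := by rw [hsum2, hx]
        _ ≤ _ := Finset.sum_le_sum (fun i _ => int_le_sq' _)
    rw [hDv]; exact hDx
  · -- q = 1 : each entry of v + shift is 1 or 2
    have hvz : ∀ i : Fin m, (v i + v (i + (k:Fin m)))^2
        = 3 * (v i + v (i + (k:Fin m))) - 2 := by
      intro i
      have hi : (i : ℕ) < 2*k+1 := i.isLt
      have h2 := hval i
      by_cases h1 : (i : ℕ) < r
      · by_cases h3 : (i + (k:Fin m)).val < r <;> simp [v, h1, h3]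
      · have h3 : (i + (k:Fin m)).val < r := by
          rw [h2]
          have e : ((i:ℕ) + k) % (2*k+1) = (i:ℕ) + k - (2*k+1) := by
            rw [Nat.mod_eq_sub_mod (by omega), Nat.mod_eq_of_lt (by omega)]
          show ((i:ℕ) + k) % (2*k+1) < r
          rw [e]; omega
        simp [v, h1, h3]
    have hcard : (Finset.univ : Finset (Fin m)).card = m := by
      simp
    have hDv : D v = 3 * (2 * (r : ℤ)) - 2 * m := by
      show ∑ i, (v i + v (i + (k:Fin m)))^2 = 3 * (2 * (r : ℤ)) - 2 * m
      rw [Finset.sum_congr rfl (fun i _ => hvz i), Finset.sum_sub_distrib,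
        ← Finset.mul_sum, hsum2, hsv, Finset.sum_const, hcard]
      push_cast
      ring
    have hDx : 3 * (2 * (r:ℤ)) - 2 * m ≤ D x := by
      show 3 * (2 * (r:ℤ)) - 2 * m ≤ ∑ i, (x i + x (i + (k:Fin m)))^2
      calc 3 * (2 * (r:ℤ)) - 2 * m
          = ∑ i, (3 * (x i + x (i + (k:Fin m))) - 2) := by
            rw [Finset.sum_sub_distrib, ← Finset.mul_sum, hsum2, hx,
              Finset.sum_const, hcard]
            push_cast
            ring
        _ ≤ _ := Finset.sum_le_sum (fun i _ => int_three_le_sq' _)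
    rw [hDv]; exact hDx
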